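/- Let f : [a,b] → ℝ be convex on [a,b] and let a = x₀ < x₁ < … < x_n = b with h_i = x_{i+1} − x_i. Define the trapezoid rule T_n(f) = Σ_{i=0}^{n−1} ((f(x_i) + f(x_{i+1}))/2)·h_i and the remainder Q_n(f) = T_n(f) − ∫_a^b f(t) dt. Then 0 ≤ (1/8)·Σ_{i=0}^{n−1} [ f′₊((x_i + x_{i+1})/2) − f′₋((x_i + x_{i+1})/2) ]·h_i² ≤ Q_n(f) ≤ (1/8)·Σ_{i=0}^{n−1} [ f′₋(x_{i+1}) − f′₊(x_i) ]·h_i². -/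

import Mathlib

open MeasureTheory Set intervalIntegral Finset

/-- Integral of an affine function. -/
lemma integral_linear_aux (A B r c d : ℝ) :
    (∫ t in c..d, (A + B * (t - r))) = A * (d - c) + B * ((d - r) ^ 2 - (c - r) ^ 2) / 2 := by
  have h : (fun t : ℝ => A + B * (t - r)) = fun t => (A - B * r) + B * t := by
    funext t; ring
  rw [h, intervalIntegral.integral_add intervalIntegrable_const
      ((show Continuous fun t : ℝ => B * t by fun_prop).intervalIntegrable c d),
    intervalIntegral.integral_const, intervalIntegral.integral_const_mul, integral_id]
  simp only [smul_eq_mul]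
  ring

/-- For a convex function, the left derivative is at most the right derivative
at an interior point. -/
lemma leftD_le_rightD_aux {S : Set ℝ} {f : ℝ → ℝ} (hf : ConvexOn ℝ S f)
    {c m d pm mm : ℝ} (hc : c ∈ S) (hm : m ∈ S) (hd : d ∈ S)
    (hcm : c < m) (hmd : m < d)
    (hpm : HasDerivWithinAt f pm (Set.Ioi m) m)
    (hmm : HasDerivWithinAt f mm (Set.Iio m) m) :
    mm ≤ pm := by
  have key : ∀ t ∈ S, t < m → slope f m t ≤ pm := by
    intro t htS htm
    refine ge_of_tendsto ((hasDerivWithinAt_iff_tendsto_slope' Set.notMem_Ioi_self).mp hpm) ?_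
    rw [eventually_nhdsWithin_iff]
    filter_upwards [eventually_lt_nhds hmd] with s hs (hs' : m < s)
    have hsS : s ∈ S := hf.1.ordConnected.out hm hd ⟨hs'.le, hs.le⟩
    have := hf.secant_mono hm htS hsS htm.ne hs'.ne' (le_of_lt (htm.trans hs'))
    simpa [slope_def_field] using this
  refine le_of_tendsto ((hasDerivWithinAt_iff_tendsto_slope' Set.notMem_Iio_self).mp hmm) ?_
  rw [eventually_nhdsWithin_iff]
  filter_upwards [eventually_gt_nhds hcm] with t ht (ht' : t < m)
  exact key t (hf.1.ordConnected.out hc hm ⟨ht.le, ht'.le⟩) ht'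

/-- Trapezoid rule bounds on a single interval. -/
lemma trap_key {f : ℝ → ℝ} {c d : ℝ} (hcd : c < d)
    (hf : ConvexOn ℝ (Set.Icc c d) f) (hcont : ContinuousOn f (Set.Icc c d))
    {pc md pm mm : ℝ}
    (hpc : HasDerivWithinAt f pc (Set.Ici c) c)
    (hmd : HasDerivWithinAt f md (Set.Iic d) d)
    (hpm : HasDerivWithinAt f pm (Set.Ici ((c + d) / 2)) ((c + d) / 2))
    (hmm : HasDerivWithinAt f mm (Set.Iic ((c + d) / 2)) ((c + d) / 2)) :
    0 ≤ (pm - mm) * (d - c) ^ 2 ∧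
    (1 / 8) * ((pm - mm) * (d - c) ^ 2) ≤ (f c + f d) / 2 * (d - c) - ∫ t in c..d, f t ∧
    (f c + f d) / 2 * (d - c) - (∫ t in c..d, f t) ≤ (1 / 8) * ((md - pc) * (d - c) ^ 2) := by
  set m := (c + d) / 2 with hm
  have hcm : c < m := by rw [hm]; linarith
  have hmdlt : m < d := by rw [hm]; linarith
  have hcS : c ∈ Set.Icc c d := ⟨le_rfl, hcd.le⟩
  have hdS : d ∈ Set.Icc c d := ⟨hcd.le, le_rfl⟩
  have hmS : m ∈ Set.Icc c d := ⟨hcm.le, hmdlt.le⟩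
  have hlr : mm ≤ pm := leftD_le_rightD_aux hf hcS hmS hdS hcm hmdlt
      (hpm.mono Set.Ioi_subset_Ici_self) (hmm.mono Set.Iio_subset_Iic_self)
  have int1 : IntervalIntegrable f volume c m :=
    (hcont.mono (Set.Icc_subset_Icc le_rfl hmdlt.le)).intervalIntegrable_of_Icc hcm.le
  have int2 : IntervalIntegrable f volume m d :=
    (hcont.mono (Set.Icc_subset_Icc hcm.le le_rfl)).intervalIntegrable_of_Icc hmdlt.le
  have hsplit : (∫ t in c..d, f t) = (∫ t in c..m, f t) + ∫ t in m..d, f t :=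
    (intervalIntegral.integral_add_adjacent_intervals int1 int2).symm
  have h1 : f m - f c ≤ mm * (m - c) := by
    have := hf.slope_le_of_hasDerivWithinAt_Iio hcS hmS hcm (hmm.mono Set.Iio_subset_Iic_self)
    rw [slope_def_field] at this
    exact (div_le_iff₀ (by linarith)).mp this
  have h2 : pm * (d - m) ≤ f d - f m := by
    have := hf.le_slope_of_hasDerivWithinAt_Ioi hmS hdS hmdlt (hpm.mono Set.Ioi_subset_Ici_self)
    rw [slope_def_field] at this
    exact (le_div_iff₀ (by linarith)).mp this
  -- chords above f (for the lower bound on Q)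
  have ch1 : ∀ t ∈ Set.Icc c m, f t ≤ f c + (f m - f c) / (m - c) * (t - c) := by
    rintro t ⟨htc, htm⟩
    rcases eq_or_lt_of_le htc with rfl | htc'
    · simp
    rcases eq_or_lt_of_le htm with rfl | htm'
    · rw [div_mul_cancel₀ _ (sub_ne_zero.mpr hcm.ne')]; linarith
    · have ht : t ∈ Set.Icc c d := ⟨htc, htm.trans hmdlt.le⟩
      have h := hf.secant_mono hcS ht hmS htc'.ne' hcm.ne' htm
      have h' := (div_le_iff₀ (by linarith : (0:ℝ) < t - c)).mp h
      linarith
  have ch2 : ∀ t ∈ Set.Icc m d, f t ≤ f m + (f d - f m) / (d - m) * (t - m) := by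
    rintro t ⟨htm, htd⟩
    rcases eq_or_lt_of_le htm with rfl | htm'
    · simp
    rcases eq_or_lt_of_le htd with rfl | htd'
    · rw [div_mul_cancel₀ _ (sub_ne_zero.mpr hmdlt.ne')]; linarith
    · have ht : t ∈ Set.Icc c d := ⟨hcm.le.trans htm, htd⟩
      have h := hf.secant_mono hmS ht hdS htm'.ne' hmdlt.ne' htd
      have h' := (div_le_iff₀ (by linarith : (0:ℝ) < t - m)).mp h
      linarith
  -- tangents below f (for the upper bound on Q)
  have tg1 : ∀ t ∈ Set.Icc c m, f c + pc * (t - c) ≤ f t := by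
    rintro t ⟨htc, htm⟩
    rcases eq_or_lt_of_le htc with rfl | htc'
    · simp
    · have ht : t ∈ Set.Icc c d := ⟨htc, htm.trans hmdlt.le⟩
      have h := hf.le_slope_of_hasDerivWithinAt_Ioi hcS ht htc' (hpc.mono Set.Ioi_subset_Ici_self)
      rw [slope_def_field] at h
      have h' := (le_div_iff₀ (by linarith : (0:ℝ) < t - c)).mp h
      linarith
  have tg2 : ∀ t ∈ Set.Icc m d, f d + md * (t - d) ≤ f t := by
    rintro t ⟨htm, htd⟩
    rcases eq_or_lt_of_le htd with rfl | htd'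
    · simp
    · have ht : t ∈ Set.Icc c d := ⟨hcm.le.trans htm, htd⟩
      have h := hf.slope_le_of_hasDerivWithinAt_Iio ht hdS htd' (hmd.mono Set.Iio_subset_Iic_self)
      rw [slope_def_field] at h
      have h' := (div_le_iff₀ (by linarith : (0:ℝ) < d - t)).mp h
      nlinarith
  -- integral comparisons
  have contaff : ∀ A B r : ℝ, Continuous fun t : ℝ => A + B * (t - r) := by
    intro A B r
    exact continuous_const.add (continuous_const.mul (continuous_id.sub continuous_const))
  have m1 : (∫ t in c..m, f t) ≤
      f c * (m - c) + (f m - f c) / (m - c) * ((m - c) ^ 2 - (c - c) ^ 2) / 2 := by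
    rw [← integral_linear_aux]
    exact intervalIntegral.integral_mono_on hcm.le int1
      ((contaff _ _ _).intervalIntegrable _ _) ch1
  have m2 : (∫ t in m..d, f t) ≤
      f m * (d - m) + (f d - f m) / (d - m) * ((d - m) ^ 2 - (m - m) ^ 2) / 2 := by
    rw [← integral_linear_aux]
    exact intervalIntegral.integral_mono_on hmdlt.le int2
      ((contaff _ _ _).intervalIntegrable _ _) ch2
  have u1 : f c * (m - c) + pc * ((m - c) ^ 2 - (c - c) ^ 2) / 2 ≤ ∫ t in c..m, f t := by
    rw [← integral_linear_aux]
    exact intervalIntegral.integral_mono_on hcm.le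
      ((contaff _ _ _).intervalIntegrable _ _) int1 tg1
  have u2 : f d * (d - m) + md * ((d - d) ^ 2 - (m - d) ^ 2) / 2 ≤
      ∫ t in m..d, f t := by
    have := intervalIntegral.integral_mono_on hmdlt.le
      ((contaff (f d) md d).intervalIntegrable _ _) int2 tg2
    rw [integral_linear_aux] at this
    exact this
  -- simplify the chord integral bounds
  have hmc0 : m - c ≠ 0 := sub_ne_zero.mpr hcm.ne'
  have hdm0 : d - m ≠ 0 := sub_ne_zero.mpr hmdlt.ne'
  have m1' : (∫ t in c..m, f t) ≤ (f c + f m) / 2 * (m - c) := by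
    have e : (f m - f c) / (m - c) * ((m - c) ^ 2 - (c - c) ^ 2) / 2
        = (f m - f c) * (m - c) / 2 := by
      field_simp
      ring
    rw [e] at m1
    linarith
  have m2' : (∫ t in m..d, f t) ≤ (f m + f d) / 2 * (d - m) := by
    have e : (f d - f m) / (d - m) * ((d - m) ^ 2 - (m - m) ^ 2) / 2
        = (f d - f m) * (d - m) / 2 := by
      field_simp
      ring
    rw [e] at m2
    linarith
  -- put everything together
  rw [hm] at h1 h2 m1' m2' u1 u2 hsplit
  refine ⟨mul_nonneg (by linarith) (sq_nonneg _), ?_, ?_⟩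
  · rw [hsplit]
    have key1 : (pm - mm) * ((d - c) / 2) ≤ f c + f d - 2 * f ((c + d) / 2) := by
      ring_nf at h1 h2 ⊢
      linarith
    have key2 := mul_le_mul_of_nonneg_right key1
      (show (0:ℝ) ≤ (d - c) / 4 by linarith)
    ring_nf at m1' m2' key2 ⊢
    linarith
  · rw [hsplit]
    ring_nf at u1 u2 ⊢
    linarith

/-- **Composite trapezoid rule for convex functions** (Corollary 5): bounds for
the remainder `Qₙ(f) = Tₙ(f) − ∫_a^b f` of the trapezoid rule
`Tₙ(f) = Σᵢ ((f(xᵢ) + f(xᵢ₊₁))/2) hᵢ`, `hᵢ = xᵢ₊₁ − xᵢ`. Here `Dp y` (resp.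
`Dm y`) is the right (resp. left) derivative of `f` at `y`. -/
theorem composite_trapezoid_rule_convex
    (a b : ℝ) (hab : a < b) (f : ℝ → ℝ)
    (hf : ConvexOn ℝ (Set.Icc a b) f)
    (n : ℕ) (hn : 0 < n) (x : ℕ → ℝ)
    (hxa : x 0 = a) (hxb : x n = b)
    (hxmono : ∀ i < n, x i < x (i + 1))
    (Dp Dm : ℝ → ℝ)
    (hDp : ∀ y ∈ Set.Ico a b, HasDerivWithinAt f (Dp y) (Set.Ici y) y)
    (hDm : ∀ y ∈ Set.Ioc a b, HasDerivWithinAt f (Dm y) (Set.Iic y) y) :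
    0 ≤ (1 / 8) * ∑ i ∈ Finset.range n,
          (Dp ((x i + x (i + 1)) / 2) - Dm ((x i + x (i + 1)) / 2)) *
            (x (i + 1) - x i) ^ 2 ∧
      (1 / 8) * (∑ i ∈ Finset.range n,
          (Dp ((x i + x (i + 1)) / 2) - Dm ((x i + x (i + 1)) / 2)) *
            (x (i + 1) - x i) ^ 2) ≤
        (∑ i ∈ Finset.range n, (f (x i) + f (x (i + 1))) / 2 * (x (i + 1) - x i)) -
          (∫ t in a..b, f t) ∧
      (∑ i ∈ Finset.range n, (f (x i) + f (x (i + 1))) / 2 * (x (i + 1) - x i)) -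
          (∫ t in a..b, f t) ≤
        (1 / 8) * ∑ i ∈ Finset.range n,
          (Dm (x (i + 1)) - Dp (x i)) * (x (i + 1) - x i) ^ 2 := by
  -- continuity of f on [a,b]
  have hcont : ContinuousOn f (Set.Icc a b) := by
    intro y hy
    rcases eq_or_lt_of_le hy.2 with h | hyb
    · have hcw : ContinuousWithinAt f (Set.Iic y) y :=
        (hDm y ⟨by rw [h]; exact hab, h.le⟩).continuousWithinAt
      exact hcw.mono fun t ht => by rw [h]; exact ht.2
    · have h1 : ContinuousWithinAt f (Set.Ici y) y := (hDp y ⟨hy.1, hyb⟩).continuousWithinAt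
      rcases eq_or_lt_of_le hy.1 with h | hay
      · exact h1.mono fun t ht => h ▸ ht.1
      · have h2 : ContinuousWithinAt f (Set.Iic y) y :=
          (hDm y ⟨hay, hy.2⟩).continuousWithinAt
        exact (h2.union h1).mono fun t _ => le_total t y
  -- monotonicity of the partition
  have mono : ∀ i j : ℕ, i ≤ j → j ≤ n → x i ≤ x j := by
    intro i j hij
    induction j, hij using Nat.le_induction with
    | base => intro _; exact le_rfl
    | succ j hj ih =>
        intro hjn
        exact (ih (by omega)).trans (hxmono j (by omega)).le
  have hax : ∀ i, i ≤ n → a ≤ x i := fun i hi => hxa ▸ mono 0 i (Nat.zero_le _) hi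
  have hxbb : ∀ i, i ≤ n → x i ≤ b := fun i hi => hxb ▸ mono i n hi le_rfl
  -- per-interval bounds
  have key : ∀ i < n,
      0 ≤ (Dp ((x i + x (i+1))/2) - Dm ((x i + x (i+1))/2)) * (x (i+1) - x i)^2 ∧
      (1/8) * ((Dp ((x i + x (i+1))/2) - Dm ((x i + x (i+1))/2)) * (x (i+1) - x i)^2) ≤
        (f (x i) + f (x (i+1)))/2 * (x (i+1) - x i) - (∫ t in x i..x (i+1), f t) ∧
      (f (x i) + f (x (i+1)))/2 * (x (i+1) - x i) - (∫ t in x i..x (i+1), f t) ≤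
        (1/8) * ((Dm (x (i+1)) - Dp (x i)) * (x (i+1) - x i)^2) := by
    intro i hi
    have hc := hax i hi.le
    have hd := hxbb (i+1) hi
    have hcd := hxmono i hi
    have hsub : Set.Icc (x i) (x (i+1)) ⊆ Set.Icc a b := Set.Icc_subset_Icc hc hd
    exact trap_key hcd (hf.subset hsub (convex_Icc _ _)) (hcont.mono hsub)
      (hDp _ ⟨hc, lt_of_lt_of_le hcd hd⟩) (hDm _ ⟨lt_of_le_of_lt hc hcd, hd⟩)
      (hDp _ ⟨by linarith, by linarith⟩) (hDm _ ⟨by linarith, by linarith⟩)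
  -- splitting the integral
  have hint : ∀ k < n, IntervalIntegrable f volume (x k) (x (k+1)) := fun k hk =>
    (hcont.mono (Set.Icc_subset_Icc (hax k hk.le) (hxbb (k+1) hk))).intervalIntegrable_of_Icc
      (hxmono k hk).le
  have hI : (∫ t in a..b, f t) = ∑ i ∈ Finset.range n, ∫ t in x i..x (i+1), f t := by
    rw [intervalIntegral.sum_integral_adjacent_intervals hint, hxa, hxb]
  refine ⟨?_, ?_, ?_⟩
  · exact mul_nonneg (by norm_num)
      (Finset.sum_nonneg fun i hi => (key i (Finset.mem_range.mp hi)).1)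
  · rw [hI, ← Finset.sum_sub_distrib, Finset.mul_sum]
    exact Finset.sum_le_sum fun i hi => (key i (Finset.mem_range.mp hi)).2.1
  · rw [hI, ← Finset.sum_sub_distrib, Finset.mul_sum]
    exact Finset.sum_le_sum fun i hi => (key i (Finset.mem_range.mp hi)).2.2
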